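/- Let c > 0 and 0 < η < 1 be real numbers. There exist a positive integer N₁ and a constant 0 < λ < 1, both depending only on c and η, such that for every integer N ≥ N₁ the following holds: for every square S ⊂ ℂ of side length l and every nonempty measurable subset E ⊆ S, if there exist functions r₁,…,r_N : E → ℝ and y₁,…,y_N : E → ℂ such that for all x ∈ E: (a) 0 < r₁(x) ≤ l·η; (b) 0 < r_{n+1}(x) ≤ η·r_n(x) for all 1 ≤ n < N; (c) y_n(x) ∈ B(x, c·r_n(x)) for all 1 ≤ n ≤ N; and (d) B(y_n(x), r_n(x)) ∩ E = ∅ for all 1 ≤ n ≤ N; then area(E) ≤ λ^N · area(S). -/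

import Mathlib

set_option maxHeartbeats 1000000
open MeasureTheory
noncomputable section PorosityAux
open scoped Classical
namespace PorAux

/-- Volume of a "box" in `ℂ` given by re/im constraints. -/
lemma volume_reim_preimage (s t : Set ℝ) (hs : MeasurableSet s) (ht : MeasurableSet t) :
    volume {z : ℂ | z.re ∈ s ∧ z.im ∈ t} = volume s * volume t := by
  have h : {z : ℂ | z.re ∈ s ∧ z.im ∈ t}
      = Complex.measurableEquivRealProd ⁻¹' (s ×ˢ t) := by
    ext z; simp [Set.mem_prod]
  rw [h, (Complex.volume_preserving_equiv_real_prod).measure_preimage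
      ((hs.prod ht).nullMeasurableSet)]
  exact (Measure.prod_prod s t)

/-- offset of the shifted dyadic grid `j` at level `k` (in units of the cell size). -/
def off (j k : ℕ) : ℝ := (-1)^k * j / 3

/-- index of the level-`k` cell of grid `j` (base size `T`) containing `u`. -/
def cIdx (T : ℝ) (j k : ℕ) (u : ℝ) : ℤ := ⌊u * 2^k / T - off j k⌋

/-- the level-`k` cell of grid `j` with index `m`. -/
def cellL (T : ℝ) (j k : ℕ) (m : ℤ) : Set ℝ :=
  Set.Ico (T * ((m + off j k) / 2^k)) (T * ((m + 1 + off j k) / 2^k))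

variable {T : ℝ} {j k : ℕ} {m : ℤ} {u u' : ℝ}

lemma mem_cellL_iff (hT : 0 < T) : u ∈ cellL T j k m ↔ cIdx T j k u = m := by
  have h2 : (0:ℝ) < 2^k := by positivity
  have key : ∀ a : ℝ, (T * (a / 2^k) ≤ u ↔ a ≤ u * 2^k / T) := by
    intro a
    have e : T * (a / 2^k) = a * T / 2^k := by ring
    rw [e, div_le_iff₀ h2, le_div_iff₀ hT]
  have key2 : ∀ a : ℝ, (u < T * (a / 2^k) ↔ u * 2^k / T < a) := by
    intro a
    have e : T * (a / 2^k) = a * T / 2^k := by ring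
    rw [e, lt_div_iff₀ h2, div_lt_iff₀ hT]
  rw [cellL, Set.mem_Ico, key, key2, cIdx, Int.floor_eq_iff]
  constructor
  · rintro ⟨h1, h2'⟩
    refine ⟨by linarith, ?_⟩
    push_cast
    linarith
  · rintro ⟨h1, h2'⟩
    push_cast at h2'
    exact ⟨by linarith, by linarith⟩

lemma self_mem_cellL (hT : 0 < T) : u ∈ cellL T j k (cIdx T j k u) :=
  (mem_cellL_iff hT).2 rfl

lemma floor_half_congr {v v' : ℝ} (h : ⌊v⌋ = ⌊v'⌋) : ⌊v/2⌋ = ⌊v'/2⌋ := by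
  have key : ∀ w : ℝ, ⌊w/2⌋ = ⌊((⌊w⌋ : ℝ))/2⌋ := by
    intro w
    set q := ⌊((⌊w⌋ : ℝ))/2⌋ with hq
    have h1 : (q:ℝ) ≤ (⌊w⌋ : ℝ)/2 := Int.floor_le _
    have h2 : (⌊w⌋ : ℝ)/2 < q + 1 := Int.lt_floor_add_one _
    have h3 : (⌊w⌋ : ℝ) ≤ w := Int.floor_le _
    have h4 : w < ⌊w⌋ + 1 := Int.lt_floor_add_one _
    -- ⌊w⌋ < 2q + 2 in ℤ hence ⌊w⌋ ≤ 2q + 1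
    have h5 : (⌊w⌋ : ℤ) < 2*q + 2 := by exact_mod_cast (by linarith : (⌊w⌋:ℝ) < 2*q + 2)
    have h6 : (⌊w⌋ : ℝ) ≤ 2*q + 1 := by exact_mod_cast (by omega : (⌊w⌋:ℤ) ≤ 2*q + 1)
    apply Int.floor_eq_iff.2
    constructor
    · linarith
    · push_cast; linarith
  rw [key v, key v', h]

lemma cIdx_step (hT : 0 < T) :
    cIdx T j k u = ⌊((cIdx T j (k+1) u : ℝ) - (-1:ℝ)^k * j) / 2⌋ := by
  have hw : 2 * off j k - off j (k+1) = (-1:ℝ)^k * j := by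
    simp only [off, pow_succ]; ring
  have hv : u * 2^k / T - off j k = ((u * 2^(k+1)/T - off j (k+1)) - (-1:ℝ)^k * j)/2 := by
    rw [pow_succ]
    have hT' : T ≠ 0 := ne_of_gt hT
    field_simp
    linear_combination (-T) * hw
  rw [cIdx, cIdx, hv]
  apply floor_half_congr
  have : ((-1:ℝ)^k * j) = (((-1)^k * (j:ℤ) : ℤ) : ℝ) := by push_cast; ring
  rw [this, Int.floor_sub_intCast, Int.floor_sub_intCast, Int.floor_intCast]

lemma cIdx_congr_of_le (hT : 0 < T) {k k' : ℕ} (hk : k ≤ k') {w : ℝ}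
    (h : cIdx T j k' w = cIdx T j k' u) : cIdx T j k w = cIdx T j k u := by
  induction k' , hk using Nat.le_induction with
  | base => exact h
  | succ n hn ih =>
      apply ih
      rw [cIdx_step hT (k := n), h, ← cIdx_step hT (k := n)]

lemma cellL_mono (hT : 0 < T) {k k' : ℕ} (hk : k ≤ k') :
    cellL T j k' (cIdx T j k' u) ⊆ cellL T j k (cIdx T j k u) := by
  intro w hw
  rw [mem_cellL_iff hT] at hw ⊢
  exact cIdx_congr_of_le hT hk hw

lemma volume_cellL (hT : 0 < T) : volume (cellL T j k m) = ENNReal.ofReal (T / 2^k) := by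
  rw [cellL, Real.volume_Ico]
  congr 1
  ring

lemma measurableSet_cellL : MeasurableSet (cellL T j k m) := measurableSet_Ico

def good1 (T : ℝ) (j k : ℕ) (u : ℝ) : Prop :=
  Int.fract (u * 2^k / T - off j k) ∈ Set.Icc (1/7 : ℝ) (6/7)

/-- For any `v` and either sign `s = ±1/3`, one of the shifts `0, s` lands the
fractional part in `[1/7, 6/7]`. -/
lemma fract_shift_exists (v : ℝ) (s : ℝ) (hs : s = 1/3 ∨ s = -(1/3)) :
    Int.fract v ∈ Set.Icc (1/7 : ℝ) (6/7) ∨ Int.fract (v - s) ∈ Set.Icc (1/7 : ℝ) (6/7) := by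
  have hf0 : (0:ℝ) ≤ Int.fract v := Int.fract_nonneg v
  have hf1 : Int.fract v < 1 := Int.fract_lt_one v
  set f := Int.fract v with hf
  have hvs : ∀ t : ℝ, Int.fract (v - t) = Int.fract (f - t) := by
    intro t
    conv_lhs => rw [← Int.floor_add_fract v]
    rw [add_sub_assoc, Int.fract_intCast_add]
  by_cases h1 : 1/7 ≤ f ∧ f ≤ 6/7
  · exact Or.inl ⟨h1.1, h1.2⟩
  · right
    rw [hvs s]
    rcases hs with rfl | rfl
    · -- shift by 1/3
      rcases (not_and_or.mp h1) with h | h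
      · push_neg at h
        -- f < 1/7 : fract (f - 1/3) = f + 2/3
        have : Int.fract (f - 1/3) = f + 2/3 := by
          have e : f - 1/3 = (f + 2/3) + ((-1 : ℤ) : ℝ) := by push_cast; ring
          rw [e, Int.fract_add_intCast, Int.fract_eq_self.2 ⟨by linarith, by linarith⟩]
        rw [this]; constructor <;> linarith
      · push_neg at h
        -- f > 6/7 : fract (f - 1/3) = f - 1/3
        have : Int.fract (f - 1/3) = f - 1/3 := by
          rw [Int.fract_eq_self.2 ⟨by linarith, by linarith⟩]
        rw [this]; constructor <;> linarith
    · rcases (not_and_or.mp h1) with h | h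
      · push_neg at h
        have : Int.fract (f - -(1/3)) = f + 1/3 := by
          rw [show f - -(1/3) = f + 1/3 by ring,
            Int.fract_eq_self.2 ⟨by linarith, by linarith⟩]
        rw [this]; constructor <;> linarith
      · push_neg at h
        have : Int.fract (f - -(1/3)) = f - 2/3 := by
          have e : f - -(1/3) = (f - 2/3) + ((1 : ℤ) : ℝ) := by push_cast; ring
          rw [e, Int.fract_add_intCast, Int.fract_eq_self.2 ⟨by linarith, by linarith⟩]
        rw [this]; constructor <;> linarith

/-- there is a good grid in `{0,1}` for each point and level. -/
lemma good1_exists (T : ℝ) (k : ℕ) (u : ℝ) : good1 T 0 k u ∨ good1 T 1 k u := by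
  have h0 : off 0 k = 0 := by simp [off]
  have h1 : off 1 k = (-1)^k * (1/3) := by simp [off]; ring
  have hs : ((-1:ℝ))^k * (1/3) = 1/3 ∨ ((-1:ℝ))^k * (1/3) = -(1/3) := by
    rcases Nat.even_or_odd k with he | ho
    · left; rw [he.neg_one_pow]; ring
    · right; rw [ho.neg_one_pow]; ring
  have := fract_shift_exists (u * 2^k / T) _ hs
  rcases this with h | h
  · left; rw [good1, h0, sub_zero]; exact h
  · right; rw [good1, h1]; exact h

variable {T c ρ : ℝ} {j k : ℕ} {m : ℤ} {u u' : ℝ}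

/-- the margin property: a good point is `1/7`-deep inside its cell. -/
lemma good1_margin (hT : 0 < T) (hg : good1 T j k u) (hm : u ∈ cellL T j k m)
    (h : |u' - u| < T/2^k/7) : u' ∈ cellL T j k m := by
  have h2 : (0:ℝ) < 2^k := by positivity
  have hidx : cIdx T j k u = m := (mem_cellL_iff hT).1 hm
  have hfr : Int.fract (u * 2^k / T - off j k) = u * 2^k / T - off j k - m := by
    rw [Int.fract]; rw [cIdx] at hidx; rw [hidx]
  rw [good1, hfr] at hg
  obtain ⟨hg1, hg2⟩ := hg
  have hd : |(u' - u) * 2^k / T| < 1/7 := by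
    rw [abs_div, abs_mul, abs_of_pos h2, abs_of_pos hT, div_lt_iff₀ hT]
    calc |u' - u| * 2^k < (T/2^k/7) * 2^k := by
          apply mul_lt_mul_of_pos_right h h2
      _ = 1/7 * T := by field_simp
  have hsplit : u' * 2^k / T = u * 2^k / T + (u' - u) * 2^k / T := by ring
  rw [mem_cellL_iff hT, cIdx, Int.floor_eq_iff, hsplit]
  rw [abs_lt] at hd
  constructor
  · linarith
  · push_cast; linarith

/-- level associated to radius ρ. -/
def lvl (c T ρ : ℝ) : ℕ := sInf {ℓ : ℕ | T / 2^ℓ ≤ 14*(1+c)*ρ}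

lemma lvl_nonempty (hc : 0 < c) (hT : 0 < T) (hρ : 0 < ρ) :
    {ℓ : ℕ | T / 2^ℓ ≤ 14*(1+c)*ρ}.Nonempty := by
  obtain ⟨n, hn⟩ := pow_unbounded_of_one_lt (T / (14*(1+c)*ρ)) (one_lt_two (α := ℝ))
  refine ⟨n, ?_⟩
  have hq : (0:ℝ) < 14*(1+c)*ρ := by positivity
  have h2 : (0:ℝ) < 2^n := by positivity
  rw [Set.mem_setOf_eq, div_le_iff₀ h2]
  rw [div_lt_iff₀ hq] at hn
  nlinarith
lemma lvl_le (hc : 0 < c) (hT : 0 < T) (hρ : 0 < ρ) :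
    T / 2^(lvl c T ρ) ≤ 14*(1+c)*ρ := Nat.sInf_mem (lvl_nonempty hc hT hρ)

lemma lvl_pos (hc : 0 < c) (hT : 0 < T) (hρ : 0 < ρ) (hsmall : 14*(1+c)*ρ < T) :
    1 ≤ lvl c T ρ := by
  rw [Nat.one_le_iff_ne_zero]
  intro h0
  rcases Nat.sInf_eq_zero.1 h0 with hmem | hemp
  · rw [Set.mem_setOf_eq] at hmem
    simp only [pow_zero] at hmem
    rw [div_one] at hmem
    linarith
  · exact absurd hemp (Set.nonempty_iff_ne_empty.1 (lvl_nonempty hc hT hρ))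

lemma lvl_gt (hc : 0 < c) (hT : 0 < T) (hρ : 0 < ρ) {ℓ' : ℕ} (h : ℓ' < lvl c T ρ) :
    14*(1+c)*ρ < T / 2^ℓ' := by
  have : ℓ' ∉ {ℓ : ℕ | T / 2^ℓ ≤ 14*(1+c)*ρ} := Nat.notMem_of_lt_sInf h
  rw [Set.mem_setOf_eq] at this
  linarith [not_le.mp this]


-- 2D cells
def cell2 (T : ℝ) (α : ℕ × ℕ) (k : ℕ) (mm : ℤ × ℤ) : Set ℂ :=
  {z : ℂ | z.re ∈ cellL T α.1 k mm.1 ∧ z.im ∈ cellL T α.2 k mm.2}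

noncomputable def cIdx2 (T : ℝ) (α : ℕ × ℕ) (k : ℕ) (z : ℂ) : ℤ × ℤ :=
  (cIdx T α.1 k z.re, cIdx T α.2 k z.im)

variable {α : ℕ × ℕ} {k' : ℕ} {mm : ℤ × ℤ} {z w : ℂ}

lemma mem_cell2_iff (hT : 0 < T) : z ∈ cell2 T α k mm ↔ cIdx2 T α k z = mm := by
  rw [cell2, Set.mem_setOf_eq, mem_cellL_iff hT, mem_cellL_iff hT, cIdx2, Prod.ext_iff]

lemma self_mem_cell2 (hT : 0 < T) : z ∈ cell2 T α k (cIdx2 T α k z) :=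
  (mem_cell2_iff hT).2 rfl

lemma cIdx2_congr_of_le (hT : 0 < T) (hk : k ≤ k')
    (h : cIdx2 T α k' w = cIdx2 T α k' z) : cIdx2 T α k w = cIdx2 T α k z := by
  rw [cIdx2, cIdx2, Prod.ext_iff] at h ⊢
  exact ⟨cIdx_congr_of_le hT hk h.1, cIdx_congr_of_le hT hk h.2⟩

/-- a deeper cell containing `z` is inside the shallower cell containing `z`. -/
lemma cell2_mono (hT : 0 < T) (hk : k ≤ k') :
    cell2 T α k' (cIdx2 T α k' z) ⊆ cell2 T α k (cIdx2 T α k z) := by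
  intro w hw
  rw [mem_cell2_iff hT] at hw ⊢
  exact cIdx2_congr_of_le hT hk hw

lemma measurableSet_cell2 : MeasurableSet (cell2 T α k mm) := by
  have : cell2 T α k mm = Complex.measurableEquivRealProd ⁻¹'
      ((cellL T α.1 k mm.1) ×ˢ (cellL T α.2 k mm.2)) := by
    ext z; simp [cell2, Set.mem_prod]
  rw [this]
  exact Complex.measurableEquivRealProd.measurable (measurableSet_cellL.prod measurableSet_cellL)

lemma volume_cell2 (hT : 0 < T) :
    volume (cell2 T α k mm) = ENNReal.ofReal ((T / 2^k)^2) := by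
  rw [cell2, volume_reim_preimage _ _ measurableSet_cellL measurableSet_cellL]
  rw [volume_cellL hT, volume_cellL hT, ← ENNReal.ofReal_mul (by positivity), sq]

/-- distinct cells at the same level are disjoint. -/
lemma cell2_disjoint (hT : 0 < T) {mm mm' : ℤ × ℤ} (h : mm ≠ mm') :
    cell2 T α k mm ∩ cell2 T α k mm' = ∅ := by
  ext z
  simp only [Set.mem_inter_iff, Set.mem_empty_iff_false, iff_false, not_and]
  intro h1 h2
  rw [mem_cell2_iff hT] at h1 h2
  exact h (h1 ▸ h2 ▸ rfl)

-- helper lemmas to append to work.lean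

lemma cellL_diam (hT : 0 < T) {w w' : ℝ} (h1 : w ∈ cellL T j k m) (h2 : w' ∈ cellL T j k m) :
    |w - w'| < T/2^k := by
  rw [cellL, Set.mem_Ico] at h1 h2
  have e : T * ((m + 1 + off j k) / 2^k) - T * ((m + off j k) / 2^k) = T/2^k := by ring
  rw [abs_sub_lt_iff]
  constructor <;> linarith

lemma cell2_nested (hT : 0 < T) {k k' : ℕ} (hk : k ≤ k') {mm mq : ℤ × ℤ} {z : ℂ}
    (hz1 : z ∈ cell2 T α k' mm) (hz2 : z ∈ cell2 T α k mq) :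
    cell2 T α k' mm ⊆ cell2 T α k mq := by
  rw [mem_cell2_iff hT] at hz1 hz2
  rw [← hz1, ← hz2]
  exact cell2_mono hT hk

lemma volume_box_Icc (a1 b1 a2 b2 : ℝ) :
    volume {z : ℂ | z.re ∈ Set.Icc a1 b1 ∧ z.im ∈ Set.Icc a2 b2}
      = ENNReal.ofReal (b1 - a1) * ENNReal.ofReal (b2 - a2) := by
  rw [volume_reim_preimage _ _ measurableSet_Icc measurableSet_Icc,
    Real.volume_Icc, Real.volume_Icc]

/-- whether grid pair α is good for point x at the level of radius ρ. -/
def goodp (c T : ℝ) (α : ℕ × ℕ) (x : ℂ) (ρ : ℝ) : Prop :=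
  good1 T α.1 (lvl c T ρ) x.re ∧ good1 T α.2 (lvl c T ρ) x.im

/-- number of usable scales of x below level ℓ. -/
noncomputable def cnt (c T : ℝ) (r : ℕ → ℂ → ℝ) (k₂ N : ℕ) (α : ℕ × ℕ) (x : ℂ) (ℓ : ℕ) : ℕ :=
  ((Finset.Icc k₂ N).filter (fun k => goodp c T α x (r k x) ∧ ℓ ≤ lvl c T (r k x))).card

lemma main (c η T : ℝ) (N k₂ d L : ℕ) (E : Set ℂ) (r : ℕ → ℂ → ℝ) (y : ℕ → ℂ → ℂ)
    (hc : 0 < c) (hη0 : 0 < η) (hη1 : η < 1) (hT : 0 < T)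
    (hd : 112*(1+c) ≤ 2^d) (hL : 1 ≤ L) (hLd : η^L * 2^(d+1) < 1)
    (hr_pos : ∀ x ∈ E, ∀ k, k₂ ≤ k → k ≤ N → 0 < r k x)
    (hr_ub : ∀ x ∈ E, ∀ k, k₂ ≤ k → k ≤ N → 14*(1+c)*(r k x) < T)
    (hr_chain : ∀ x ∈ E, ∀ k k', k₂ ≤ k → k ≤ k' → k' ≤ N → r k' x ≤ η^(k'-k) * r k x)
    (hy : ∀ x ∈ E, ∀ k, k₂ ≤ k → k ≤ N → dist (y k x) x < c * r k x)
    (hhole : ∀ x ∈ E, ∀ k, k₂ ≤ k → k ≤ N → Metric.ball (y k x) (r k x) ∩ E = ∅) :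
    ∀ j : ℕ, ∀ α : ℕ × ℕ, ∀ ℓq : ℕ, ∀ mq : ℤ × ℤ,
      volume {x | x ∈ E ∧ x ∈ cell2 T α ℓq mq ∧ j ≤ cnt c T r k₂ N α x ℓq}
        ≤ ENNReal.ofReal ((1 - 1/(3136*(1+c)^2*L))^j * (T/2^ℓq)^2) := by
  have hc1 : (0:ℝ) < 1 + c := by linarith
  set lam : ℝ := 1 - 1/(3136*(1+c)^2*L) with hlam_def
  have hδL : (0:ℝ) < 1/(3136*(1+c)^2*L) := by positivity
  have hδL1 : 1/(3136*(1+c)^2*L) < 1 := by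
    rw [div_lt_one (by positivity)]
    have h1 : (1:ℝ) ≤ (1+c)^2 := by nlinarith
    have h2 : (1:ℝ) ≤ (L:ℝ) := by exact_mod_cast hL
    nlinarith
  have hlam0 : 0 < lam := by rw [hlam_def]; linarith
  have hlam1 : lam < 1 := by rw [hlam_def]; linarith
  have hBern : 1 - 1/(3136*(1+c)^2) ≤ lam ^ L := by
    have hL0 : (L:ℝ) ≠ 0 := by positivity
    have := one_add_mul_le_pow (a := -(1/(3136*(1+c)^2*L))) (by nlinarith) L
    have e1 : (1:ℝ) + L * -(1/(3136*(1+c)^2*L)) = 1 - 1/(3136*(1+c)^2) := by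
      field_simp
      ring
    have e2 : (1:ℝ) + -(1/(3136*(1+c)^2*L)) = lam := by rw [hlam_def]; ring
    rw [e1, e2] at this
    exact this
  intro j
  induction j using Nat.strong_induction_on with
  | _ j IH =>
    intro α ℓq mq
    rcases Nat.eq_zero_or_pos j with rfl | hj
    · -- base case
      rw [pow_zero, one_mul, ← volume_cell2 (α := α) (k := ℓq) (mm := mq) hT]
      apply measure_mono
      intro x hx
      exact hx.2.1
    -- the inductive step
    set A := {x | x ∈ E ∧ x ∈ cell2 T α ℓq mq ∧ j ≤ cnt c T r k₂ N α x ℓq} with hA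
    set C : ℕ → ℤ × ℤ → Prop := fun ℓ mm => ∃ x', x' ∈ E ∧ x' ∈ cell2 T α ℓq mq ∧
        ∃ k, k₂ ≤ k ∧ k ≤ N ∧ goodp c T α x' (r k x') ∧ lvl c T (r k x') = ℓ ∧
          cIdx2 T α ℓ x' = mm with hCdef
    set M : Set (ℕ × ℤ × ℤ) := {p | ℓq ≤ p.1 ∧ C p.1 p.2 ∧
        ∀ ℓ'', ℓq ≤ ℓ'' → ℓ'' < p.1 → ∀ z ∈ cell2 T α p.1 p.2,
          ¬ C ℓ'' (cIdx2 T α ℓ'' z)} with hMdef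
    have hcell_sub_q : ∀ p ∈ M, cell2 T α p.1 p.2 ⊆ cell2 T α ℓq mq := by
      rintro ⟨ℓp, mp⟩ hp
      obtain ⟨hℓq, ⟨x', hx'E, hx'q, k, hk1, hk2, hgood, hlvl, hidx⟩, hmin⟩ := hp
      exact cell2_nested hT hℓq ((mem_cell2_iff hT).2 hidx) hx'q
    have hcover : A ⊆ ⋃ p ∈ M, cell2 T α p.1 p.2 := by
      intro x hx
      obtain ⟨hxE, hxq, hxc⟩ := hx
      have hpos : 0 < ((Finset.Icc k₂ N).filter
          (fun k => goodp c T α x (r k x) ∧ ℓq ≤ lvl c T (r k x))).card := lt_of_lt_of_le hj hxc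
      obtain ⟨k, hkmem⟩ := Finset.card_pos.1 hpos
      rw [Finset.mem_filter, Finset.mem_Icc] at hkmem
      obtain ⟨⟨hk1, hk2⟩, hgood, hℓq⟩ := hkmem
      set S : Set ℕ := {ℓ | ℓq ≤ ℓ ∧ C ℓ (cIdx2 T α ℓ x)} with hSdef
      have hSne : S.Nonempty := by
        refine ⟨lvl c T (r k x), hℓq, ?_⟩
        exact ⟨x, hxE, hxq, k, hk1, hk2, hgood, rfl, rfl⟩
      have hmem := Nat.sInf_mem hSne
      obtain ⟨hq0, hC0⟩ := hmem
      refine Set.mem_biUnion (?_ : (sInf S, cIdx2 T α (sInf S) x) ∈ M) (self_mem_cell2 hT)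
      refine ⟨hq0, hC0, ?_⟩
      intro ℓ'' h1 h2 z hz hC''
      have hzi : cIdx2 T α (sInf S) z = cIdx2 T α (sInf S) x := (mem_cell2_iff hT).1 hz
      have hzi'' : cIdx2 T α ℓ'' z = cIdx2 T α ℓ'' x :=
        cIdx2_congr_of_le hT (le_of_lt h2) hzi
      rw [hzi''] at hC''
      exact Nat.notMem_of_lt_sInf h2 ⟨h1, hC''⟩
    have hkey : ∀ p ∈ M, ∀ p' ∈ M, p.1 ≤ p'.1 → p ≠ p' → ∀ z, z ∈ cell2 T α p.1 p.2 →
        z ∈ cell2 T α p'.1 p'.2 → False := by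
      rintro ⟨ℓ1, m1⟩ hp ⟨ℓ2, m2⟩ hp' hle hne z hz hz'
      rcases Nat.eq_or_lt_of_le hle with heq | hlt
      · dsimp at heq
        subst heq
        have e1 : cIdx2 T α ℓ1 z = m1 := (mem_cell2_iff hT).1 hz
        have e2 : cIdx2 T α ℓ1 z = m2 := (mem_cell2_iff hT).1 hz'
        exact hne (by rw [Prod.ext_iff]; exact ⟨rfl, e1 ▸ e2 ▸ rfl⟩)
      · obtain ⟨hq1, hC1, hmin1⟩ := hp
        obtain ⟨hq2, hC2, hmin2⟩ := hp'
        have e1 : cIdx2 T α ℓ1 z = m1 := (mem_cell2_iff hT).1 hz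
        exact hmin2 ℓ1 hq1 hlt z hz' (e1 ▸ hC1)
    have hdisj : M.PairwiseDisjoint (fun p : ℕ × ℤ × ℤ => cell2 T α p.1 p.2) := by
      intro p hp p' hp' hne
      rcases le_total p.1 p'.1 with h | h
      · exact Set.disjoint_left.2 (fun z hz hz' => hkey p hp p' hp' h hne z hz hz')
      · exact Set.disjoint_right.2 (fun z hz hz' => hkey p' hp' p hp h (Ne.symm hne) z hz hz')
    have hstep : ∀ p ∈ M, volume (A ∩ cell2 T α p.1 p.2)
        ≤ ENNReal.ofReal (lam^j * (T/2^(p.1))^2) := by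
      rintro ⟨ℓp, mp⟩ hp
      obtain ⟨hℓqp, ⟨x', hx'E, hx'q, k, hk1, hk2, hgood, hlvl, hidx⟩, hmin⟩ := hp
      dsimp only at hℓqp hmin hidx hlvl ⊢
      set ρ := r k x' with hρdef
      set yk := y k x' with hykdef
      have hρ0 : 0 < ρ := hr_pos x' hx'E k hk1 hk2
      have hub : 14*(1+c)*ρ < T := hr_ub x' hx'E k hk1 hk2
      have hh0 : (0:ℝ) < T/2^ℓp := by positivity
      have hρup : T/2^ℓp ≤ 14*(1+c)*ρ := by
        rw [← hlvl]; exact lvl_le hc hT hρ0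
      have hℓp1 : 1 ≤ ℓp := by rw [← hlvl]; exact lvl_pos hc hT hρ0 hub
      have hpow : (2:ℝ)^ℓp = 2^(ℓp-1)*2 := by
        rw [← pow_succ]; congr 1; omega
      have hρlo : 14*(1+c)*ρ < T/2^(ℓp-1) := by
        rw [← hlvl]
        exact lvl_gt hc hT hρ0 (by omega)
      have hmarg : (1+c)*ρ < (T/2^ℓp)/7 := by
        have h1 : T/2^(ℓp-1) = 2*(T/2^ℓp) := by
          rw [hpow]; ring
        rw [h1] at hρlo
        linarith
      have hx'p : x' ∈ cell2 T α ℓp mp := (mem_cell2_iff hT).2 hidx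
      have hmargin : ∀ z : ℂ, |z.re - x'.re| < T/2^ℓp/7 → |z.im - x'.im| < T/2^ℓp/7 →
          z ∈ cell2 T α ℓp mp := by
        intro z h1 h2
        have hg1 : good1 T α.1 ℓp x'.re := by rw [← hlvl]; exact hgood.1
        have hg2 : good1 T α.2 ℓp x'.im := by rw [← hlvl]; exact hgood.2
        exact ⟨good1_margin hT hg1 hx'p.1 h1, good1_margin hT hg2 hx'p.2 h2⟩
      have hyx : dist yk x' < c * ρ := hy x' hx'E k hk1 hk2
      set Bx : Set ℂ := {z : ℂ | z.re ∈ Set.Icc (yk.re - ρ/4) (yk.re + ρ/4) ∧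
        z.im ∈ Set.Icc (yk.im - ρ/4) (yk.im + ρ/4)} with hBxdef
      have hBxE : ∀ z ∈ Bx, z ∉ E := by
        intro z hz hzE
        have hb : z ∈ Metric.ball yk ρ := by
          rw [Metric.mem_ball, Complex.dist_eq]
          calc ‖z - yk‖ ≤ |(z - yk).re| + |(z - yk).im| :=
                Complex.norm_le_abs_re_add_abs_im _
            _ ≤ ρ/4 + ρ/4 := by
                obtain ⟨⟨a1, a2⟩, b1, b2⟩ := hz
                rw [Complex.sub_re, Complex.sub_im]
                gcongr <;> rw [abs_le] <;> constructor <;> linarith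
            _ < ρ := by linarith
        have := hhole x' hx'E k hk1 hk2
        exact Set.eq_empty_iff_forall_notMem.1 this z ⟨hb, hzE⟩
      have hBxp : Bx ⊆ cell2 T α ℓp mp := by
        intro z hz
        obtain ⟨⟨a1, a2⟩, b1, b2⟩ := hz
        have hre : |yk.re - x'.re| < c*ρ := by
          calc |yk.re - x'.re| = |(yk - x').re| := by rw [Complex.sub_re]
            _ ≤ ‖yk - x'‖ := Complex.abs_re_le_norm _
            _ < c*ρ := by rw [← Complex.dist_eq]; exact hyx
        have him : |yk.im - x'.im| < c*ρ := by
          calc |yk.im - x'.im| = |(yk - x').im| := by rw [Complex.sub_im]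
            _ ≤ ‖yk - x'‖ := Complex.abs_im_le_norm _
            _ < c*ρ := by rw [← Complex.dist_eq]; exact hyx
        rw [abs_lt] at hre him
        apply hmargin z
        · rw [abs_lt]; constructor <;> linarith
        · rw [abs_lt]; constructor <;> linarith
      -- subcells at level ℓp + d
      have h2d : (0:ℝ) < 2^d := by positivity
      have ht0 : (0:ℝ) < T/2^(ℓp+d) := by positivity
      have htsplit : T/2^(ℓp+d) = (T/2^ℓp)/2^d := by
        rw [pow_add]; ring
      have ht : T/2^(ℓp+d) ≤ ρ/8 := by
        rw [htsplit, div_le_iff₀ h2d]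
        nlinarith [hρup, hd, hρ0]
      set Sub : Set (ℤ × ℤ) := {mm | cell2 T α (ℓp+d) mm ⊆ cell2 T α ℓp mp} with hSubdef
      set S1 : Set (ℤ × ℤ) := {mm | cell2 T α (ℓp+d) mm ⊆ Bx} with hS1def
      set U1 : Set ℂ := ⋃ mm ∈ S1, cell2 T α (ℓp+d) mm with hU1def
      set U2 : Set ℂ := ⋃ mm ∈ (Sub \ S1), cell2 T α (ℓp+d) mm with hU2def
      have hU1p : U1 ⊆ cell2 T α ℓp mp :=
        Set.iUnion₂_subset fun mm h => h.trans hBxp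
      have hU2p : U2 ⊆ cell2 T α ℓp mp :=
        Set.iUnion₂_subset fun mm h => h.1
      have hU1U2 : Disjoint U1 U2 := by
        rw [Set.disjoint_left]
        intro z hz1 hz2
        rcases Set.mem_iUnion₂.1 hz1 with ⟨mm, hmm, hzmm⟩
        rcases Set.mem_iUnion₂.1 hz2 with ⟨mm', hmm', hzmm'⟩
        have : mm ≠ mm' := fun h => hmm'.2 (h ▸ hmm)
        have := cell2_disjoint hT (α := α) (k := ℓp+d) this
        exact Set.eq_empty_iff_forall_notMem.1 this z ⟨hzmm, hzmm'⟩
      have hcover2 : A ∩ cell2 T α ℓp mp ⊆ ⋃ mm ∈ Sub \ S1, (A ∩ cell2 T α (ℓp+d) mm) := by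
        intro x ⟨hxA, hxp⟩
        have hxc : x ∈ cell2 T α (ℓp+d) (cIdx2 T α (ℓp+d) x) := self_mem_cell2 hT
        have hcs : cell2 T α (ℓp+d) (cIdx2 T α (ℓp+d) x) ⊆ cell2 T α ℓp mp :=
          cell2_nested hT (Nat.le_add_right _ _) hxc hxp
        have hnotS1 : cIdx2 T α (ℓp+d) x ∉ S1 := by
          intro hS1mem
          exact hBxE x (hS1mem hxc) hxA.1
        exact Set.mem_biUnion ⟨hcs, hnotS1⟩ ⟨hxA, hxc⟩
      -- the count drop
      have hcnt : ∀ x, x ∈ A → x ∈ cell2 T α ℓp mp →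
          j - L ≤ cnt c T r k₂ N α x (ℓp+d) := by
        intro x hxA hxp
        obtain ⟨hxE, hxq, hxc⟩ := hxA
        simp only [cnt] at hxc ⊢
        set F2 := (Finset.Icc k₂ N).filter (fun k' => goodp c T α x (r k' x) ∧
            ℓp ≤ lvl c T (r k' x) ∧ lvl c T (r k' x) < ℓp + d) with hF2
        have hd1 : 1 ≤ d := by
          by_contra hd0
          push_neg at hd0
          interval_cases d
          · simp at hd; linarith
        have hF2card : F2.card ≤ L := by
          rcases Finset.eq_empty_or_nonempty F2 with he | hne
          · rw [he]; simp
          · set k0 := F2.min' hne with hk0def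
            have hk0 : k0 ∈ F2 := F2.min'_mem hne
            have hmins : ∀ k' ∈ F2, k0 ≤ k' := fun k' hk' => F2.min'_le k' hk'
            clear_value k0
            rw [hF2, Finset.mem_filter, Finset.mem_Icc] at hk0
            obtain ⟨⟨hk01, hk02⟩, hg0, hl0a, hl0b⟩ := hk0
            have hsub2 : F2 ⊆ Finset.Icc k0 (k0 + (L-1)) := by
              intro k' hk'
              have hmin' := hmins k' hk'
              rw [Finset.mem_Icc]
              refine ⟨hmin', ?_⟩
              by_contra hgt
              push_neg at hgt
              rw [hF2, Finset.mem_filter, Finset.mem_Icc] at hk'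
              obtain ⟨⟨hk1', hk2'⟩, hg', hla', hlb'⟩ := hk'
              have hch : r k' x ≤ η^(k'-k0) * r k0 x :=
                hr_chain x hxE k0 k' hk01 (by omega) hk2'
              have hee : η^(k'-k0) ≤ η^L :=
                pow_le_pow_of_le_one hη0.le hη1.le (by omega)
              have hr00 : 0 < r k0 x := hr_pos x hxE k0 hk01 hk02
              have hr0' : 0 < r k' x := hr_pos x hxE k' hk1' hk2'
              have hlv1 : 1 ≤ lvl c T (r k0 x) :=
                lvl_pos hc hT hr00 (hr_ub x hxE k0 hk01 hk02)
              have hgt0 : 14*(1+c)*(r k0 x) < T/2^(lvl c T (r k0 x) - 1) :=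
                lvl_gt hc hT hr00 (by omega)
              have hmono : T/2^(lvl c T (r k0 x) - 1) ≤ T/2^(ℓp - 1) := by
                have hpw : (2:ℝ)^(ℓp-1) ≤ 2^(lvl c T (r k0 x) - 1) :=
                  pow_le_pow_right₀ one_le_two (by omega)
                rw [div_le_div_iff₀ (by positivity) (by positivity)]
                exact mul_le_mul_of_nonneg_left hpw hT.le
              have hb1 : 14*(1+c)*(r k0 x) < 2*(T/2^ℓp) := by
                have e : T/2^(ℓp-1) = 2*(T/2^ℓp) := by rw [hpow]; ring
                rw [e] at hmono
                linarith
              have hup' : T/2^(lvl c T (r k' x)) ≤ 14*(1+c)*(r k' x) := lvl_le hc hT hr0'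
              have hmono' : T/2^(ℓp+d-1) ≤ T/2^(lvl c T (r k' x)) := by
                have hpw : (2:ℝ)^(lvl c T (r k' x)) ≤ 2^(ℓp+d-1) :=
                  pow_le_pow_right₀ one_le_two (by omega)
                rw [div_le_div_iff₀ (by positivity) (by positivity)]
                exact mul_le_mul_of_nonneg_left hpw hT.le
              have e3 : T / 2^(ℓp+d-1) = 2*(T/2^ℓp)/2^d := by
                rw [show (2:ℝ)^(ℓp+d-1) = 2^ℓp * 2^(d-1) from by
                    rw [← pow_add]; congr 1; omega,
                  show (2:ℝ)^d = 2^(d-1)*2 from by rw [← pow_succ]; congr 1; omega]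
                ring
              have st2 : r k' x ≤ η^L * r k0 x :=
                le_trans hch (mul_le_mul_of_nonneg_right hee hr00.le)
              have st5 : 14*(1+c)*(r k' x) ≤ η^L * (2*(T/2^ℓp)) := by
                calc 14*(1+c)*(r k' x) ≤ 14*(1+c)*(η^L * r k0 x) := by
                      apply mul_le_mul_of_nonneg_left st2 (by positivity)
                  _ = η^L * (14*(1+c)*(r k0 x)) := by ring
                  _ ≤ η^L * (2*(T/2^ℓp)) := by
                      apply mul_le_mul_of_nonneg_left hb1.le (by positivity)
              have st6 : 2*(T/2^ℓp) ≤ η^L * (2*(T/2^ℓp)) * 2^d := by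
                rw [← div_le_iff₀ h2d, ← e3]
                exact le_trans hmono' (le_trans hup' st5)
              have hpd : (2:ℝ)^(d+1) = 2^d*2 := pow_succ 2 d
              have hu : η^L*2^d < 1/2 := by nlinarith [hLd, hpd]
              have hv : η^L*(2*(T/2^ℓp))*2^d < (1/2)*(2*(T/2^ℓp)) := by
                have hm := mul_lt_mul_of_pos_right hu
                  (show (0:ℝ) < 2*(T/2^ℓp) by linarith)
                calc η^L*(2*(T/2^ℓp))*2^d = (η^L*2^d)*(2*(T/2^ℓp)) := by ring
                  _ < (1/2)*(2*(T/2^ℓp)) := hm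
              linarith [st6, hv, hh0]
            calc F2.card ≤ (Finset.Icc k0 (k0 + (L-1))).card := Finset.card_le_card hsub2
              _ = L := by rw [Nat.card_Icc]; omega
        have hsplit : (Finset.Icc k₂ N).filter (fun k' => goodp c T α x (r k' x) ∧
              ℓq ≤ lvl c T (r k' x)) ⊆
            ((Finset.Icc k₂ N).filter (fun k' => goodp c T α x (r k' x) ∧
              ℓp + d ≤ lvl c T (r k' x))) ∪ F2 := by
          intro k' hk'
          rw [Finset.mem_filter] at hk'
          obtain ⟨hIcc, hg', hℓq'⟩ := hk'
          rw [Finset.mem_union]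
          by_cases hcase : ℓp + d ≤ lvl c T (r k' x)
          · left; rw [Finset.mem_filter]; exact ⟨hIcc, hg', hcase⟩
          · right
            push_neg at hcase
            rw [hF2, Finset.mem_filter]
            refine ⟨hIcc, hg', ?_, hcase⟩
            by_contra hlt
            push_neg at hlt
            rw [Finset.mem_Icc] at hIcc
            exact hmin (lvl c T (r k' x)) hℓq' hlt x hxp
              ⟨x, hxE, hxq, k', hIcc.1, hIcc.2, hg', rfl, rfl⟩
        have hcard : ((Finset.Icc k₂ N).filter (fun k' => goodp c T α x (r k' x) ∧
              ℓq ≤ lvl c T (r k' x))).card ≤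
            ((Finset.Icc k₂ N).filter (fun k' => goodp c T α x (r k' x) ∧
              ℓp + d ≤ lvl c T (r k' x))).card + L := by
          calc ((Finset.Icc k₂ N).filter (fun k' => goodp c T α x (r k' x) ∧
                ℓq ≤ lvl c T (r k' x))).card
              ≤ (((Finset.Icc k₂ N).filter (fun k' => goodp c T α x (r k' x) ∧
                ℓp + d ≤ lvl c T (r k' x))) ∪ F2).card := Finset.card_le_card hsplit
            _ ≤ ((Finset.Icc k₂ N).filter (fun k' => goodp c T α x (r k' x) ∧
                ℓp + d ≤ lvl c T (r k' x))).card + F2.card := Finset.card_union_le _ _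
            _ ≤ _ + L := by omega
        omega
      -- per subcell bound by induction hypothesis
      have hIH : ∀ mm ∈ Sub \ S1, volume (A ∩ cell2 T α (ℓp+d) mm)
          ≤ ENNReal.ofReal (lam^(j-L)) * volume (cell2 T α (ℓp+d) mm) := by
        intro mm hmm
        have hsub : A ∩ cell2 T α (ℓp+d) mm ⊆
            {x | x ∈ E ∧ x ∈ cell2 T α (ℓp+d) mm ∧ j - L ≤ cnt c T r k₂ N α x (ℓp+d)} := by
          intro x ⟨hxA, hxc⟩
          exact ⟨hxA.1, hxc, hcnt x hxA (hmm.1 hxc)⟩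
        calc volume (A ∩ cell2 T α (ℓp+d) mm)
            ≤ volume {x | x ∈ E ∧ x ∈ cell2 T α (ℓp+d) mm ∧
                j - L ≤ cnt c T r k₂ N α x (ℓp+d)} := measure_mono hsub
          _ ≤ ENNReal.ofReal (lam^(j-L) * (T/2^(ℓp+d))^2) := IH (j-L) (by omega) α (ℓp+d) mm
          _ = ENNReal.ofReal (lam^(j-L)) * volume (cell2 T α (ℓp+d) mm) := by
              rw [volume_cell2 hT, ← ENNReal.ofReal_mul (by positivity)]
      -- the hole gain
      have hU1vol : ENNReal.ofReal ((ρ/4)^2) ≤ volume U1 := by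
        set Sh : Set ℂ := {z : ℂ | z.re ∈ Set.Icc (yk.re - ρ/4 + T/2^(ℓp+d)) (yk.re + ρ/4 - T/2^(ℓp+d)) ∧
            z.im ∈ Set.Icc (yk.im - ρ/4 + T/2^(ℓp+d)) (yk.im + ρ/4 - T/2^(ℓp+d))} with hShdef
        have hShU1 : Sh ⊆ U1 := by
          intro z hz
          obtain ⟨⟨a1, a2⟩, b1, b2⟩ := hz
          have hzc : z ∈ cell2 T α (ℓp+d) (cIdx2 T α (ℓp+d) z) := self_mem_cell2 hT
          refine Set.mem_biUnion (?_ : cIdx2 T α (ℓp+d) z ∈ S1) hzc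
          intro w hw
          have hre := cellL_diam hT hw.1 hzc.1
          have him := cellL_diam hT hw.2 hzc.2
          rw [abs_lt] at hre him
          refine ⟨?_, ?_⟩
          · rw [Set.mem_Icc]; constructor <;> linarith
          · rw [Set.mem_Icc]; constructor <;> linarith
        calc ENNReal.ofReal ((ρ/4)^2)
            ≤ ENNReal.ofReal ((ρ/2 - 2*(T/2^(ℓp+d))) * (ρ/2 - 2*(T/2^(ℓp+d)))) := by
              apply ENNReal.ofReal_le_ofReal
              nlinarith [ht, hρ0]
          _ = ENNReal.ofReal (ρ/2 - 2*(T/2^(ℓp+d))) * ENNReal.ofReal (ρ/2 - 2*(T/2^(ℓp+d))) := by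
              rw [ENNReal.ofReal_mul (by linarith)]
          _ = volume Sh := by
              rw [hShdef, volume_box_Icc]
              congr 2 <;> ring
          _ ≤ volume U1 := measure_mono hShU1
      -- measure bookkeeping
      have hU2vol : volume U2 ≤ ENNReal.ofReal ((1 - 1/(3136*(1+c)^2)) * (T/2^ℓp)^2) := by
        have hsum : volume U1 + volume U2 ≤ ENNReal.ofReal ((T/2^ℓp)^2) := by
          rw [← measure_union hU1U2 (by
            exact MeasurableSet.biUnion (Set.to_countable _) (fun mm _ => measurableSet_cell2))]
          rw [← volume_cell2 (α := α) (mm := mp) hT]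
          exact measure_mono (Set.union_subset hU1p hU2p)
        have h1 : volume U2 ≤ ENNReal.ofReal ((T/2^ℓp)^2) - ENNReal.ofReal ((ρ/4)^2) := by
          apply ENNReal.le_sub_of_add_le_left (by simp)
          calc ENNReal.ofReal ((ρ/4)^2) + volume U2 ≤ volume U1 + volume U2 := by gcongr
            _ ≤ ENNReal.ofReal ((T/2^ℓp)^2) := hsum
        calc volume U2 ≤ ENNReal.ofReal ((T/2^ℓp)^2) - ENNReal.ofReal ((ρ/4)^2) := h1
          _ = ENNReal.ofReal ((T/2^ℓp)^2 - (ρ/4)^2) := by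
              rw [ENNReal.ofReal_sub _ (by positivity)]
          _ ≤ ENNReal.ofReal ((1 - 1/(3136*(1+c)^2)) * (T/2^ℓp)^2) := by
              apply ENNReal.ofReal_le_ofReal
              have hργ : (T/2^ℓp)/(14*(1+c)) ≤ ρ := by
                rw [div_le_iff₀ (by positivity)]
                linarith
              have : (T/2^ℓp)^2/(3136*(1+c)^2) ≤ (ρ/4)^2 := by
                have hsq : (T/2^ℓp)^2 ≤ (14*(1+c)*ρ)^2 := by
                  have := mul_self_le_mul_self hh0.le hρup
                  calc (T/2^ℓp)^2 = (T/2^ℓp)*(T/2^ℓp) := sq (T/2^ℓp) ▸ rfl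
                    _ ≤ (14*(1+c)*ρ)*(14*(1+c)*ρ) := this
                    _ = (14*(1+c)*ρ)^2 := by ring
                rw [div_le_iff₀ (by positivity)]
                have e : (ρ/4)^2*(3136*(1+c)^2) = (14*(1+c)*ρ)^2 := by ring
                rw [e]
                exact hsq
              have he : (1 - 1/(3136*(1+c)^2)) * (T/2^ℓp)^2
                  = (T/2^ℓp)^2 - (T/2^ℓp)^2/(3136*(1+c)^2) := by ring
              rw [he]
              linarith
      -- put everything together for this cell
      calc volume (A ∩ cell2 T α ℓp mp)
          ≤ volume (⋃ mm ∈ Sub \ S1, (A ∩ cell2 T α (ℓp+d) mm)) := measure_mono hcover2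
        _ ≤ ∑' mm : (Sub \ S1 : Set (ℤ×ℤ)), volume (A ∩ cell2 T α (ℓp+d) mm) :=
            measure_biUnion_le volume (Set.to_countable _) _
        _ ≤ ∑' mm : (Sub \ S1 : Set (ℤ×ℤ)),
              ENNReal.ofReal (lam^(j-L)) * volume (cell2 T α (ℓp+d) mm) := by
            apply ENNReal.tsum_le_tsum
            rintro ⟨mm, hmm⟩
            exact hIH mm hmm
        _ = ENNReal.ofReal (lam^(j-L)) * volume U2 := by
            rw [hU2def, measure_biUnion (Set.to_countable _) (fun mm hmm mm' hmm' hne => by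
                have := cell2_disjoint hT (α := α) (k := ℓp+d) hne
                exact Set.disjoint_iff_inter_eq_empty.2 this)
              (fun mm _ => measurableSet_cell2), ENNReal.tsum_mul_left]
        _ ≤ ENNReal.ofReal (lam^(j-L)) *
              ENNReal.ofReal ((1 - 1/(3136*(1+c)^2)) * (T/2^ℓp)^2) := by gcongr
        _ = ENNReal.ofReal (lam^(j-L) * ((1 - 1/(3136*(1+c)^2)) * (T/2^ℓp)^2)) := by
            rw [← ENNReal.ofReal_mul (by positivity)]
        _ ≤ ENNReal.ofReal (lam^j * (T/2^ℓp)^2) := by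
            apply ENNReal.ofReal_le_ofReal
            have h1 : (1 - 1/(3136*(1+c)^2)) ≤ lam^(min j L) := by
              calc (1 - 1/(3136*(1+c)^2)) ≤ lam^L := hBern
                _ ≤ lam^(min j L) := pow_le_pow_of_le_one hlam0.le hlam1.le (min_le_right _ _)
            calc lam^(j-L) * ((1 - 1/(3136*(1+c)^2)) * (T/2^ℓp)^2)
                ≤ lam^(j-L) * (lam^(min j L) * (T/2^ℓp)^2) := by
                  apply mul_le_mul_of_nonneg_left _ (by positivity)
                  apply mul_le_mul_of_nonneg_right h1 (by positivity)
              _ = lam^(j-L+min j L) * (T/2^ℓp)^2 := by rw [pow_add]; ring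
              _ = lam^j * (T/2^ℓp)^2 := by congr 2; omega

    -- conclude
    calc volume A ≤ volume (⋃ p ∈ M, A ∩ cell2 T α p.1 p.2) := by
          apply measure_mono
          intro x hx
          rcases Set.mem_iUnion₂.1 (hcover hx) with ⟨p, hpM, hxp⟩
          exact Set.mem_biUnion hpM ⟨hx, hxp⟩
      _ ≤ ∑' p : M, volume (A ∩ cell2 T α (p:ℕ × ℤ × ℤ).1 (p:ℕ × ℤ × ℤ).2) :=
          measure_biUnion_le volume (Set.to_countable M) _
      _ ≤ ∑' p : M, ENNReal.ofReal (lam^j) * volume (cell2 T α (p:ℕ × ℤ × ℤ).1 (p:ℕ × ℤ × ℤ).2) := by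
          apply ENNReal.tsum_le_tsum
          rintro ⟨p, hp⟩
          have := hstep p hp
          rw [volume_cell2 hT, ← ENNReal.ofReal_mul (by positivity)]
          exact this
      _ = ENNReal.ofReal (lam^j) * volume (⋃ p ∈ M, cell2 T α p.1 p.2) := by
          rw [measure_biUnion (Set.to_countable M) hdisj (fun p _ => measurableSet_cell2),
            ENNReal.tsum_mul_left]
      _ ≤ ENNReal.ofReal (lam^j) * volume (cell2 T α ℓq mq) := by
          gcongr
          exact Set.iUnion₂_subset hcell_sub_q
      _ = ENNReal.ofReal (lam ^ j * (T / 2 ^ ℓq) ^ 2) := by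
          rw [volume_cell2 hT, ← ENNReal.ofReal_mul (by positivity)]


end PorAux

open PorAux

/-- The closed axis-parallel square `{z : Re z ∈ [a, a+l], Im z ∈ [b, b+l]}`. -/
def Square (a b l : ℝ) : Set ℂ :=
  {z : ℂ | z.re ∈ Set.Icc a (a + l) ∧ z.im ∈ Set.Icc b (b + l)}

theorem stmt0 (c η : ℝ) (hc : 0 < c) (hη0 : 0 < η) (hη1 : η < 1) :
    ∃ (N₁ : ℕ) (lam : ℝ), 0 < N₁ ∧ 0 < lam ∧ lam < 1 ∧
      ∀ N : ℕ, N₁ ≤ N →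
      ∀ (a b l : ℝ), 0 < l →
      ∀ E : Set ℂ, E.Nonempty → MeasurableSet E → E ⊆ Square a b l →
      ∀ (r : ℕ → ℂ → ℝ) (y : ℕ → ℂ → ℂ),
        (∀ x ∈ E, 0 < r 1 x ∧ r 1 x ≤ l * η) →
        (∀ x ∈ E, ∀ n, 1 ≤ n → n < N → 0 < r (n + 1) x ∧ r (n + 1) x ≤ η * r n x) →
        (∀ x ∈ E, ∀ n, 1 ≤ n → n ≤ N → y n x ∈ Metric.ball x (c * r n x)) →
        (∀ x ∈ E, ∀ n, 1 ≤ n → n ≤ N → Metric.ball (y n x) (r n x) ∩ E = ∅) →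
        volume E ≤ ENNReal.ofReal (lam ^ N) * volume (Square a b l) := by
  have hc1 : (0:ℝ) < 1 + c := by linarith
  -- choose d
  obtain ⟨d, hd'⟩ := pow_unbounded_of_one_lt (112*(1+c)) (one_lt_two (α := ℝ))
  have hd : 112*(1+c) ≤ 2^d := hd'.le
  -- choose L
  obtain ⟨L₀, hL₀⟩ := exists_pow_lt_of_lt_one (show (0:ℝ) < 1/2^(d+1) by positivity) hη1
  set L := max L₀ 1 with hLdef
  have hL1 : 1 ≤ L := le_max_right _ _
  have hLd : η^L * 2^(d+1) < 1 := by
    have h1 : η^L ≤ η^L₀ := pow_le_pow_of_le_one hη0.le hη1.le (le_max_left _ _)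
    have h2 : (0:ℝ) < 2^(d+1) := by positivity
    calc η^L * 2^(d+1) ≤ η^L₀ * 2^(d+1) := by gcongr
      _ < (1/2^(d+1)) * 2^(d+1) := by gcongr
      _ = 1 := by field_simp
  -- the one-step constant
  set lam0 : ℝ := 1 - 1/(3136*(1+c)^2*L) with hlam0def
  have hδ0 : (0:ℝ) < 1/(3136*(1+c)^2*L) := by positivity
  have hδ1 : 1/(3136*(1+c)^2*L) < 1 := by
    rw [div_lt_one (by positivity)]
    have h1 : (1:ℝ) ≤ (1+c)^2 := by nlinarith
    have h2 : (1:ℝ) ≤ (L:ℝ) := by exact_mod_cast hL1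
    nlinarith
  have hlam00 : 0 < lam0 := by rw [hlam0def]; linarith
  have hlam01 : lam0 < 1 := by rw [hlam0def]; linarith
  -- the final constant
  set lam : ℝ := 1 - (1-lam0)/10 with hlamdef
  have hlam_pos : 0 < lam := by rw [hlamdef]; linarith
  have hlam_lt1 : lam < 1 := by rw [hlamdef]; linarith
  have hlam5 : lam0 ≤ lam^5 := by
    have := one_add_mul_le_pow (a := -(1-lam0)/10) (by linarith) 5
    have e : (1:ℝ) + 5 * (-(1-lam0)/10) = 1 - (1-lam0)/2 := by ring
    push_cast at this
    rw [e] at this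
    calc lam0 ≤ 1 - (1-lam0)/2 := by linarith
      _ ≤ (1 + -(1-lam0)/10)^5 := this
      _ = lam^5 := by rw [hlamdef]; ring_nf
  -- choose k₂
  obtain ⟨k₂', hk₂'⟩ := exists_pow_lt_of_lt_one (show (0:ℝ) < 1/(14*(1+c)) by positivity) hη1
  set k₂ := max k₂' 1 with hk₂def
  have hk₂1 : 1 ≤ k₂ := le_max_right _ _
  have hk₂ : 14*(1+c)*η^k₂ < 1 := by
    have h1 : η^k₂ ≤ η^k₂' := pow_le_pow_of_le_one hη0.le hη1.le (le_max_left _ _)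
    calc 14*(1+c)*η^k₂ ≤ 14*(1+c)*η^k₂' := by gcongr
      _ < 14*(1+c)*(1/(14*(1+c))) := by gcongr
      _ = 1 := by field_simp
  -- choose m₀
  obtain ⟨m₀, hm₀⟩ := exists_pow_lt_of_lt_one (show (0:ℝ) < 1/16 by norm_num) hlam_lt1
  -- N₁
  refine ⟨5*k₂ + 4*m₀ + 5, lam, by omega, hlam_pos, hlam_lt1, ?_⟩
  intro N hN a b l hl E hEne hEmeas hES r y ha hb hy0 hh0
  have hk₂N : k₂ ≤ N := by omega
  -- basic derived bounds on the radii
  have hrk : ∀ x ∈ E, ∀ k, 1 ≤ k → k ≤ N → 0 < r k x ∧ r k x ≤ η^k * l := by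
    intro x hx k
    induction k with
    | zero => intro h; omega
    | succ n ih =>
        intro _ hn1
        rcases Nat.eq_zero_or_pos n with rfl | hn
        · refine ⟨(ha x hx).1, ?_⟩
          have := (ha x hx).2
          rw [pow_one]
          linarith
        · obtain ⟨hp, hub⟩ := ih hn (by omega)
          obtain ⟨hp', hub'⟩ := hb x hx n hn (by omega)
          refine ⟨hp', ?_⟩
          calc r (n+1) x ≤ η * r n x := hub'
            _ ≤ η * (η^n * l) := by apply mul_le_mul_of_nonneg_left hub hη0.le
            _ = η^(n+1) * l := by rw [pow_succ]; ring
  have hr_pos : ∀ x ∈ E, ∀ k, k₂ ≤ k → k ≤ N → 0 < r k x :=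
    fun x hx k h1 h2 => (hrk x hx k (by omega) h2).1
  have hr_ub : ∀ x ∈ E, ∀ k, k₂ ≤ k → k ≤ N → 14*(1+c)*(r k x) < l := by
    intro x hx k h1 h2
    have h3 := (hrk x hx k (by omega) h2).2
    have h4 : η^k ≤ η^k₂ := pow_le_pow_of_le_one hη0.le hη1.le h1
    have h5 : (0:ℝ) < η^k₂ := by positivity
    calc 14*(1+c)*(r k x) ≤ 14*(1+c)*(η^k * l) := by gcongr
      _ ≤ 14*(1+c)*(η^k₂ * l) := by gcongr
      _ = (14*(1+c)*η^k₂) * l := by ring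
      _ < 1 * l := by apply mul_lt_mul_of_pos_right hk₂ hl
      _ = l := one_mul l
  have hr_chain : ∀ x ∈ E, ∀ k k', k₂ ≤ k → k ≤ k' → k' ≤ N → r k' x ≤ η^(k'-k) * r k x := by
    intro x hx k k' hk hkk' hk'N
    induction k', hkk' using Nat.le_induction with
    | base => simp
    | succ n hn ih =>
        have h1 := ih (by omega)
        have h2 := (hb x hx n (by omega) (by omega)).2
        calc r (n+1) x ≤ η * r n x := h2
          _ ≤ η * (η^(n-k) * r k x) := by
              apply mul_le_mul_of_nonneg_left h1 hη0.le
          _ = η^(n+1-k) * r k x := by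
              rw [show n+1-k = (n-k)+1 by omega, pow_succ]; ring
  have hy' : ∀ x ∈ E, ∀ k, k₂ ≤ k → k ≤ N → dist (y k x) x < c * r k x := by
    intro x hx k h1 h2
    have := hy0 x hx k (by omega) h2
    rwa [Metric.mem_ball] at this
  have hh' : ∀ x ∈ E, ∀ k, k₂ ≤ k → k ≤ N → Metric.ball (y k x) (r k x) ∩ E = ∅ :=
    fun x hx k h1 h2 => hh0 x hx k (by omega) h2
  -- the main lemma
  have hmain := main c η l N k₂ d L E r y hc hη0 hη1 hl hd hL1 hLd
    hr_pos hr_ub hr_chain hy' hh'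
  -- pigeonhole target count
  set j₀ : ℕ := (N - k₂)/4 + 1 with hj₀def
  -- pigeonhole over the four grids
  have hpigeon : ∀ x ∈ E, j₀ ≤ cnt c l r k₂ N (0,0) x 0 ∨ j₀ ≤ cnt c l r k₂ N (0,1) x 0
      ∨ j₀ ≤ cnt c l r k₂ N (1,0) x 0 ∨ j₀ ≤ cnt c l r k₂ N (1,1) x 0 := by
    intro x hx
    by_contra hcon
    push_neg at hcon
    obtain ⟨h00, h01, h10, h11⟩ := hcon
    have hsub : Finset.Icc k₂ N ⊆
        (((Finset.Icc k₂ N).filter (fun k => goodp c l (0,0) x (r k x) ∧ 0 ≤ lvl c l (r k x))) ∪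
         ((Finset.Icc k₂ N).filter (fun k => goodp c l (0,1) x (r k x) ∧ 0 ≤ lvl c l (r k x)))) ∪
        (((Finset.Icc k₂ N).filter (fun k => goodp c l (1,0) x (r k x) ∧ 0 ≤ lvl c l (r k x))) ∪
         ((Finset.Icc k₂ N).filter (fun k => goodp c l (1,1) x (r k x) ∧ 0 ≤ lvl c l (r k x)))) := by
      intro k hk
      have hg1 := good1_exists l (lvl c l (r k x)) x.re
      have hg2 := good1_exists l (lvl c l (r k x)) x.im
      simp only [Finset.mem_union, Finset.mem_filter]
      rcases hg1 with h1 | h1 <;> rcases hg2 with h2 | h2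
      · exact Or.inl (Or.inl ⟨hk, ⟨h1, h2⟩, Nat.zero_le _⟩)
      · exact Or.inl (Or.inr ⟨hk, ⟨h1, h2⟩, Nat.zero_le _⟩)
      · exact Or.inr (Or.inl ⟨hk, ⟨h1, h2⟩, Nat.zero_le _⟩)
      · exact Or.inr (Or.inr ⟨hk, ⟨h1, h2⟩, Nat.zero_le _⟩)
    have hcard := Finset.card_le_card hsub
    have hcard2 := Finset.card_union_le
      (((Finset.Icc k₂ N).filter (fun k => goodp c l (0,0) x (r k x) ∧ 0 ≤ lvl c l (r k x))) ∪
       ((Finset.Icc k₂ N).filter (fun k => goodp c l (0,1) x (r k x) ∧ 0 ≤ lvl c l (r k x))))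
      (((Finset.Icc k₂ N).filter (fun k => goodp c l (1,0) x (r k x) ∧ 0 ≤ lvl c l (r k x))) ∪
       ((Finset.Icc k₂ N).filter (fun k => goodp c l (1,1) x (r k x) ∧ 0 ≤ lvl c l (r k x))))
    have hcard3 := Finset.card_union_le
      ((Finset.Icc k₂ N).filter (fun k => goodp c l (0,0) x (r k x) ∧ 0 ≤ lvl c l (r k x)))
      ((Finset.Icc k₂ N).filter (fun k => goodp c l (0,1) x (r k x) ∧ 0 ≤ lvl c l (r k x)))
    have hcard4 := Finset.card_union_le
      ((Finset.Icc k₂ N).filter (fun k => goodp c l (1,0) x (r k x) ∧ 0 ≤ lvl c l (r k x)))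
      ((Finset.Icc k₂ N).filter (fun k => goodp c l (1,1) x (r k x) ∧ 0 ≤ lvl c l (r k x)))
    rw [Nat.card_Icc] at hcard
    simp only [cnt] at h00 h01 h10 h11
    omega
  -- covering the square by four level-0 cells per grid
  have hidx_range : ∀ (jj : ℕ) (u v : ℝ), v ≤ u → u ≤ v + l →
      cIdx l jj 0 u = cIdx l jj 0 v ∨ cIdx l jj 0 u = cIdx l jj 0 v + 1 := by
    intro jj u v h1 h2
    have hmono1 : cIdx l jj 0 v ≤ cIdx l jj 0 u := by
      apply Int.floor_mono
      have h3 : v/l ≤ u/l := by gcongr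
      simp only [pow_zero, mul_one]
      linarith
    have hmono2 : cIdx l jj 0 u ≤ cIdx l jj 0 v + 1 := by
      have h4 : u/l ≤ v/l + 1 := by
        have e : v/l + 1 = (v+l)/l := by field_simp
        rw [e]
        gcongr
      calc cIdx l jj 0 u ≤ ⌊(v * 2^0 / l - off jj 0) + 1⌋ := by
            apply Int.floor_mono
            simp only [pow_zero, mul_one]
            linarith
        _ = cIdx l jj 0 v + 1 := Int.floor_add_one _
    omega
  set X := ENNReal.ofReal (lam0 ^ j₀ * (l/2^(0:ℕ))^2) with hX
  -- each of the four pieces is covered by four cells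
  have hvolEα : ∀ α : ℕ × ℕ, volume {x | x ∈ E ∧ j₀ ≤ cnt c l r k₂ N α x 0}
      ≤ X + X + (X + X) := by
    intro α
    set ma := cIdx l α.1 0 a with hma
    set mb := cIdx l α.2 0 b with hmb
    have hsub : {x | x ∈ E ∧ j₀ ≤ cnt c l r k₂ N α x 0} ⊆
        ({x | x ∈ E ∧ x ∈ cell2 l α 0 (ma, mb) ∧ j₀ ≤ cnt c l r k₂ N α x 0} ∪
         {x | x ∈ E ∧ x ∈ cell2 l α 0 (ma+1, mb) ∧ j₀ ≤ cnt c l r k₂ N α x 0}) ∪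
        ({x | x ∈ E ∧ x ∈ cell2 l α 0 (ma, mb+1) ∧ j₀ ≤ cnt c l r k₂ N α x 0} ∪
         {x | x ∈ E ∧ x ∈ cell2 l α 0 (ma+1, mb+1) ∧ j₀ ≤ cnt c l r k₂ N α x 0}) := by
      intro x hx
      obtain ⟨hxE, hxc⟩ := hx
      obtain ⟨hre, him⟩ := hES hxE
      rw [Set.mem_Icc] at hre him
      have h1 := hidx_range α.1 x.re a hre.1 hre.2
      have h2 := hidx_range α.2 x.im b him.1 him.2
      have hself : x ∈ cell2 l α 0 (cIdx l α.1 0 x.re, cIdx l α.2 0 x.im) :=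
        self_mem_cell2 hl
      rcases h1 with h1 | h1 <;> rcases h2 with h2 | h2
      · exact Or.inl (Or.inl ⟨hxE, by rw [hma, hmb, ← h1, ← h2]; exact hself, hxc⟩)
      · exact Or.inr (Or.inl ⟨hxE, by rw [hma, hmb, ← h1, ← h2]; exact hself, hxc⟩)
      · exact Or.inl (Or.inr ⟨hxE, by rw [hma, hmb, ← h1, ← h2]; exact hself, hxc⟩)
      · exact Or.inr (Or.inr ⟨hxE, by rw [hma, hmb, ← h1, ← h2]; exact hself, hxc⟩)
    calc volume {x | x ∈ E ∧ j₀ ≤ cnt c l r k₂ N α x 0} ≤ _ := measure_mono hsub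
      _ ≤ _ + _ := measure_union_le _ _
      _ ≤ (X + X) + (X + X) := by
          gcongr
          · calc volume _ ≤ _ + _ := measure_union_le _ _
              _ ≤ X + X := by
                  gcongr
                  · exact hmain j₀ α 0 (ma, mb)
                  · exact hmain j₀ α 0 (ma+1, mb)
          · calc volume _ ≤ _ + _ := measure_union_le _ _
              _ ≤ X + X := by
                  gcongr
                  · exact hmain j₀ α 0 (ma, mb+1)
                  · exact hmain j₀ α 0 (ma+1, mb+1)
  -- combine the four grids
  have hEsub : E ⊆ ({x | x ∈ E ∧ j₀ ≤ cnt c l r k₂ N (0,0) x 0} ∪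
      {x | x ∈ E ∧ j₀ ≤ cnt c l r k₂ N (0,1) x 0}) ∪
      ({x | x ∈ E ∧ j₀ ≤ cnt c l r k₂ N (1,0) x 0} ∪
      {x | x ∈ E ∧ j₀ ≤ cnt c l r k₂ N (1,1) x 0}) := by
    intro x hx
    rcases hpigeon x hx with h | h | h | h
    · exact Or.inl (Or.inl ⟨hx, h⟩)
    · exact Or.inl (Or.inr ⟨hx, h⟩)
    · exact Or.inr (Or.inl ⟨hx, h⟩)
    · exact Or.inr (Or.inr ⟨hx, h⟩)
  have hvolE : volume E ≤ 16 * X := by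
    have h4 : (16:ENNReal) * X = (X+X+(X+X)) + (X+X+(X+X)) + ((X+X+(X+X)) + (X+X+(X+X))) := by
      ring
    rw [h4]
    calc volume E ≤ _ := measure_mono hEsub
      _ ≤ _ + _ := measure_union_le _ _
      _ ≤ (X+X+(X+X)) + (X+X+(X+X)) + ((X+X+(X+X)) + (X+X+(X+X))) := by
          gcongr
          · calc volume _ ≤ _ + _ := measure_union_le _ _
              _ ≤ (X+X+(X+X)) + (X+X+(X+X)) := by
                  gcongr
                  · exact hvolEα (0,0)
                  · exact hvolEα (0,1)
          · calc volume _ ≤ _ + _ := measure_union_le _ _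
              _ ≤ (X+X+(X+X)) + (X+X+(X+X)) := by
                  gcongr
                  · exact hvolEα (1,0)
                  · exact hvolEα (1,1)
  -- final arithmetic
  have hSq : volume (Square a b l) = ENNReal.ofReal l * ENNReal.ofReal l := by
    have : Square a b l = {z : ℂ | z.re ∈ Set.Icc a (a+l) ∧ z.im ∈ Set.Icc b (b+l)} := rfl
    rw [this, volume_reim_preimage _ _ measurableSet_Icc measurableSet_Icc,
      Real.volume_Icc, Real.volume_Icc]
    congr 2 <;> ring
  have hreal : 16 * (lam0 ^ j₀ * (l/2^(0:ℕ))^2) ≤ lam ^ N * (l * l) := by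
    have hexp : N + m₀ ≤ 5*j₀ := by omega
    have hstep1 : lam0 ^ j₀ ≤ lam ^ (5*j₀) := by
      calc lam0 ^ j₀ ≤ (lam^5) ^ j₀ := pow_le_pow_left₀ hlam00.le hlam5 j₀
        _ = lam ^ (5*j₀) := by rw [← pow_mul]
    have hstep2 : lam ^ (5*j₀) ≤ lam ^ (N + m₀) :=
      pow_le_pow_of_le_one hlam_pos.le hlam_lt1.le hexp
    have hstep3 : lam ^ (N + m₀) = lam ^ N * lam ^ m₀ := pow_add lam N m₀
    have hlamN : (0:ℝ) < lam ^ N := by positivity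
    have hl2 : (l/2^(0:ℕ))^2 = l * l := by norm_num; ring
    rw [hl2]
    have hll : (0:ℝ) < l * l := by positivity
    calc 16 * (lam0 ^ j₀ * (l*l)) ≤ 16 * ((lam ^ N * lam ^ m₀) * (l*l)) := by
          rw [← hstep3]
          have h := le_trans hstep1 hstep2
          exact mul_le_mul_of_nonneg_left
            (mul_le_mul_of_nonneg_right h hll.le) (by norm_num)
      _ ≤ 16 * ((lam ^ N * (1/16)) * (l*l)) := by
          apply mul_le_mul_of_nonneg_left _ (by norm_num : (0:ℝ) ≤ 16)
          apply mul_le_mul_of_nonneg_right _ hll.le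
          exact mul_le_mul_of_nonneg_left hm₀.le hlamN.le
      _ = lam ^ N * (l*l) := by ring
  calc volume E ≤ 16 * X := hvolE
    _ = ENNReal.ofReal (16 * (lam0 ^ j₀ * (l/2^(0:ℕ))^2)) := by
        rw [hX, show (16:ENNReal) = ENNReal.ofReal (16:ℝ) by norm_num,
          ← ENNReal.ofReal_mul (by norm_num : (0:ℝ) ≤ 16)]
    _ ≤ ENNReal.ofReal (lam ^ N * (l * l)) := ENNReal.ofReal_le_ofReal hreal
    _ = ENNReal.ofReal (lam ^ N) * volume (Square a b l) := by
        rw [hSq, ENNReal.ofReal_mul (by positivity), ENNReal.ofReal_mul (by positivity)]
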